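/- Let Γ = (V; E) be a d-regular directed multigraph with n vertices, with adjacency matrix M (an n×n matrix with nonnegative integer entries whose every row sum and column sum equals d). Let θ₂ denote the second largest eigenvalue (counted with multiplicity, in decreasing order) of the symmetric positive semidefinite matrix N = Mᵀ M. Then for any sets of vertices S, T ⊆ V one has |e(S,T)·n − |S|·|T|·d| ≤ n·√(θ₂·|S|·|T|), where e(S,T) = Σ_{s∈S, t∈T} M_{st} is the number of edges in Γ from S to T. -/

import Mathlib

open Matrix Finset

/-- Completeness of an orthonormal family of `n` vectors in `ℝⁿ`. -/
lemma stmt3_complete {n : ℕ} (u : Fin n → Fin n → ℝ)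
    (hON : ∀ i j, dotProduct (u i) (u j) = if i = j then 1 else 0) :
    ∀ k l : Fin n, ∑ i, u i k * u i l = if k = l then 1 else 0 := by
  have h1 : (Matrix.of u) * (Matrix.of u)ᵀ = 1 := by
    ext i j
    simpa [Matrix.mul_apply, Matrix.one_apply, dotProduct] using hON i j
  have h2 := mul_eq_one_comm.mp h1
  intro k l
  have h3 := congrFun (congrFun h2 k) l
  simpa [Matrix.mul_apply, Matrix.one_apply, Matrix.transpose_apply] using h3


/-- Scalar arithmetic for the easy case `d² ≤ θ₂`. -/
lemma stmt3_scalar (n d e s t θ2 : ℝ) (hn : 0 < n) (hs : 0 ≤ s) (ht : 0 ≤ t) (hd : 0 ≤ d)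
    (hst : s * t ≤ n * n) (he0 : 0 ≤ e) (heS : e ≤ d * s) (heT : e ≤ d * t)
    (hcase : d ^ 2 ≤ θ2) :
    |e * n - s * t * d| ≤ n * Real.sqrt (θ2 * s * t) := by
  set r : ℝ := Real.sqrt (s * t) with hr
  have hr0 : 0 ≤ r := Real.sqrt_nonneg _
  have hr2 : r ^ 2 = s * t := Real.sq_sqrt (by positivity)
  have hrn : r ≤ n := by nlinarith [hr2, hr0]
  have hprod : e * e ≤ (d * s) * (d * t) := mul_le_mul heS heT he0 (by positivity)
  have hegeo : e ≤ d * r := by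
    have h : e ^ 2 ≤ (d * r) ^ 2 := by nlinarith
    calc e = Real.sqrt (e ^ 2) := (Real.sqrt_sq he0).symm
      _ ≤ Real.sqrt ((d * r) ^ 2) := Real.sqrt_le_sqrt h
      _ = d * r := Real.sqrt_sq (by positivity)
  have hge : d * r ≤ Real.sqrt (θ2 * s * t) := by
    have h1 : (d * r) ^ 2 ≤ θ2 * s * t := by nlinarith
    calc d * r = Real.sqrt ((d * r) ^ 2) := (Real.sqrt_sq (by positivity)).symm
      _ ≤ _ := Real.sqrt_le_sqrt h1
  rw [abs_le]
  constructor
  · have h1 : s * t * d ≤ n * (d * r) := by nlinarith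
    have h2 : n * (d * r) ≤ n * Real.sqrt (θ2 * s * t) :=
      mul_le_mul_of_nonneg_left hge hn.le
    nlinarith
  · have h1 : e * n ≤ (d * r) * n := mul_le_mul_of_nonneg_right hegeo hn.le
    have h2 : n * (d * r) ≤ n * Real.sqrt (θ2 * s * t) :=
      mul_le_mul_of_nonneg_left hge hn.le
    nlinarith [mul_nonneg (mul_nonneg hs ht) hd]

/-- Discrepancy inequality for a `d`-regular directed multigraph `Γ` on `n` vertices
with adjacency matrix `M`: if `θ ⟨1⟩` is the second largest eigenvalue (with
multiplicity, realized by an orthonormal eigenbasis `u`) of `N = Mᵀ M`, then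
`|e(S,T)·n − |S|·|T|·d| ≤ n·√(θ₂·|S|·|T|)` for all vertex sets `S, T`. -/
theorem stmt_3 (n d : ℕ) (hn : 2 ≤ n) (M : Matrix (Fin n) (Fin n) ℕ)
    (hrow : ∀ i, ∑ j, M i j = d)
    (hcol : ∀ j, ∑ i, M i j = d)
    (θ : Fin n → ℝ) (u : Fin n → Fin n → ℝ)
    (hmono : ∀ i j : Fin n, i ≤ j → θ j ≤ θ i)
    (hnonneg : ∀ i, 0 ≤ θ i)
    (hON : ∀ i j, dotProduct (u i) (u j) = if i = j then 1 else 0)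
    (heig : ∀ i, ((M.map (Nat.cast : ℕ → ℝ)).transpose * M.map (Nat.cast : ℕ → ℝ)).mulVec (u i)
      = θ i • u i)
    (S T : Finset (Fin n)) :
    |(∑ s ∈ S, ∑ t ∈ T, (M s t : ℝ)) * n - (S.card : ℝ) * T.card * d| ≤
      (n : ℝ) * Real.sqrt (θ ⟨1, by omega⟩ * S.card * T.card) := by
  haveI : NeZero n := ⟨by omega⟩
  have hn1 : 1 < n := by omega
  have hnR : (0 : ℝ) < n := by exact_mod_cast (by omega : 0 < n)
  set A : Matrix (Fin n) (Fin n) ℝ := M.map (Nat.cast : ℕ → ℝ) with hA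
  set N : Matrix (Fin n) (Fin n) ℝ := Aᵀ * A with hNdef
  set θ₂ : ℝ := θ ⟨1, hn1⟩ with ht2
  have comp := stmt3_complete u hON
  -- expansion in the orthonormal basis
  have expand : ∀ (v : Fin n → ℝ) (k : Fin n), v k = ∑ i, (v ⬝ᵥ u i) * u i k := by
    intro v k
    calc v k = ∑ l, v l * (if l = k then 1 else 0) := by simp
      _ = ∑ l, v l * ∑ i, u i l * u i k := by
          refine Finset.sum_congr rfl fun l _ => ?_
          rw [comp l k]
      _ = ∑ l, ∑ i, v l * (u i l * u i k) := by
          refine Finset.sum_congr rfl fun l _ => ?_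
          rw [Finset.mul_sum]
      _ = ∑ i, ∑ l, v l * (u i l * u i k) := Finset.sum_comm
      _ = ∑ i, (v ⬝ᵥ u i) * u i k := by
          refine Finset.sum_congr rfl fun i _ => ?_
          rw [dotProduct, Finset.sum_mul]
          exact Finset.sum_congr rfl fun l _ => (mul_assoc _ _ _).symm
  -- Parseval
  have parseval : ∀ v : Fin n → ℝ, v ⬝ᵥ v = ∑ i, (v ⬝ᵥ u i)^2 := by
    intro v
    calc v ⬝ᵥ v = ∑ k, v k * v k := rfl
      _ = ∑ k, (∑ i, (v ⬝ᵥ u i) * u i k) * v k := by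
          refine Finset.sum_congr rfl fun k _ => ?_
          rw [← expand v k]
      _ = ∑ k, ∑ i, (v ⬝ᵥ u i) * u i k * v k := by
          refine Finset.sum_congr rfl fun k _ => ?_
          rw [Finset.sum_mul]
      _ = ∑ i, ∑ k, (v ⬝ᵥ u i) * u i k * v k := Finset.sum_comm
      _ = ∑ i, (v ⬝ᵥ u i)^2 := by
          refine Finset.sum_congr rfl fun i _ => ?_
          have : ∑ k, (v ⬝ᵥ u i) * u i k * v k = (v ⬝ᵥ u i) * ∑ k, u i k * v k := by
            rw [Finset.mul_sum]
            exact Finset.sum_congr rfl fun k _ => (mul_assoc _ _ _)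
          rw [this, show (∑ k, u i k * v k) = u i ⬝ᵥ v from rfl, dotProduct_comm, sq]
  -- symmetry of N
  have hNsymm : Nᵀ = N := by rw [hNdef, Matrix.transpose_mul, Matrix.transpose_transpose]
  have hsym : ∀ w v : Fin n → ℝ, w ⬝ᵥ (N *ᵥ v) = (N *ᵥ w) ⬝ᵥ v := by
    intro w v
    rw [Matrix.dotProduct_mulVec]
    congr 1
    rw [← Matrix.mulVec_transpose, hNsymm]
  -- quadratic form
  have quad : ∀ v : Fin n → ℝ, v ⬝ᵥ (N *ᵥ v) = ∑ i, θ i * (v ⬝ᵥ u i)^2 := by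
    intro v
    calc v ⬝ᵥ (N *ᵥ v) = ∑ k, v k * (N *ᵥ v) k := rfl
      _ = ∑ k, (∑ i, (v ⬝ᵥ u i) * u i k) * (N *ᵥ v) k := by
          refine Finset.sum_congr rfl fun k _ => ?_
          rw [← expand v k]
      _ = ∑ k, ∑ i, (v ⬝ᵥ u i) * u i k * (N *ᵥ v) k := by
          refine Finset.sum_congr rfl fun k _ => ?_
          rw [Finset.sum_mul]
      _ = ∑ i, ∑ k, (v ⬝ᵥ u i) * u i k * (N *ᵥ v) k := Finset.sum_comm
      _ = ∑ i, (v ⬝ᵥ u i) * (u i ⬝ᵥ (N *ᵥ v)) := by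
          refine Finset.sum_congr rfl fun i _ => ?_
          have h5 : (v ⬝ᵥ u i) * (u i ⬝ᵥ (N *ᵥ v))
              = ∑ k, (v ⬝ᵥ u i) * (u i k * (N *ᵥ v) k) := Finset.mul_sum _ _ _
          rw [h5]
          exact Finset.sum_congr rfl fun k _ => (mul_assoc _ _ _)
      _ = ∑ i, θ i * (v ⬝ᵥ u i)^2 := by
          refine Finset.sum_congr rfl fun i _ => ?_
          rw [hsym, heig i, smul_dotProduct, smul_eq_mul,
            dotProduct_comm]
          ring
  -- indicator vectors
  set x : Fin n → ℝ := fun k => if k ∈ S then 1 else 0 with hx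
  set y : Fin n → ℝ := fun k => if k ∈ T then 1 else 0 with hy
  set one : Fin n → ℝ := fun _ => 1 with hone
  have hsum_x : ∀ f : Fin n → ℝ, x ⬝ᵥ f = ∑ k ∈ S, f k := by
    intro f
    simp [dotProduct, hx, ite_mul, Finset.sum_ite_mem, Finset.univ_inter]
  have hysum : ∑ k, y k = T.card := by simp [hy]
  have hyy2 : ∑ k, y k * y k = T.card := by
    simp [hy, ite_and, mul_ite, mul_one, mul_zero]
  have hxx : x ⬝ᵥ x = S.card := by rw [hsum_x]; simp [hx]
  have hx1 : x ⬝ᵥ one = S.card := by rw [hsum_x]; simp [hone]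
  have hE : (∑ s ∈ S, ∑ t ∈ T, (M s t : ℝ)) = x ⬝ᵥ (A *ᵥ y) := by
    rw [hsum_x]
    refine Finset.sum_congr rfl fun s _ => ?_
    simp [Matrix.mulVec, dotProduct, hy, mul_ite, mul_one, mul_zero,
      Finset.sum_ite_mem, Finset.univ_inter, hA]
  have hrowR : A *ᵥ one = (d : ℝ) • one := by
    funext i
    have : ∑ j, (M i j : ℝ) = d := by exact_mod_cast congrArg (Nat.cast : ℕ → ℝ) (hrow i)
    simp [Matrix.mulVec, dotProduct, hone, hA, this]
  have hcolR : Aᵀ *ᵥ one = (d : ℝ) • one := by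
    funext j
    have : ∑ i, (M i j : ℝ) = d := by exact_mod_cast congrArg (Nat.cast : ℕ → ℝ) (hcol j)
    simp [Matrix.mulVec, dotProduct, hone, hA, Matrix.transpose_apply, this]
  have hN1 : N *ᵥ one = ((d : ℝ)^2) • one := by
    rw [hNdef, ← Matrix.mulVec_mulVec, hrowR, Matrix.mulVec_smul, hcolR, smul_smul]
    ring_nf
  have hstn : (S.card : ℝ) * T.card ≤ (n:ℝ) * n := by
    have h1 : (S.card : ℝ) ≤ n := by exact_mod_cast Finset.card_le_card (Finset.subset_univ S) |>.trans_eq (by simp)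
    have h2 : (T.card : ℝ) ≤ n := by exact_mod_cast Finset.card_le_card (Finset.subset_univ T) |>.trans_eq (by simp)
    have h3 : (0:ℝ) ≤ S.card := Nat.cast_nonneg _
    have h4 : (0:ℝ) ≤ T.card := Nat.cast_nonneg _
    nlinarith
  by_cases hcase : (d : ℝ)^2 ≤ θ₂
  · -- easy case: θ₂ ≥ d²
    set e : ℝ := ∑ s ∈ S, ∑ t ∈ T, (M s t : ℝ) with he
    have he0 : 0 ≤ e := by positivity
    have heS : e ≤ d * S.card := by
      have h : ∀ s ∈ S, ∑ t ∈ T, (M s t : ℝ) ≤ d := by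
        intro s _
        calc ∑ t ∈ T, (M s t : ℝ) ≤ ∑ t, (M s t : ℝ) :=
              Finset.sum_le_sum_of_subset_of_nonneg (Finset.subset_univ T)
                (fun t _ _ => by positivity)
          _ = d := by exact_mod_cast congrArg (Nat.cast : ℕ → ℝ) (hrow s)
      calc e ≤ ∑ _s ∈ S, (d:ℝ) := Finset.sum_le_sum h
        _ = d * S.card := by simp [mul_comm]
    have heT : e ≤ d * T.card := by
      rw [he, Finset.sum_comm]
      have h : ∀ t ∈ T, ∑ s ∈ S, (M s t : ℝ) ≤ d := by
        intro t _
        calc ∑ s ∈ S, (M s t : ℝ) ≤ ∑ s, (M s t : ℝ) :=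
              Finset.sum_le_sum_of_subset_of_nonneg (Finset.subset_univ S)
                (fun s _ _ => by positivity)
          _ = d := by exact_mod_cast congrArg (Nat.cast : ℕ → ℝ) (hcol t)
      calc ∑ t ∈ T, ∑ s ∈ S, (M s t : ℝ) ≤ ∑ _t ∈ T, (d:ℝ) := Finset.sum_le_sum h
        _ = d * T.card := by simp [mul_comm]
    exact stmt3_scalar n d e S.card T.card θ₂ hnR (Nat.cast_nonneg _) (Nat.cast_nonneg _)
      (by positivity) hstn he0 heS heT hcase
  · -- main case: θ₂ < d²
    push_neg at hcase
    have hle1 : ∀ i : Fin n, i ≠ 0 → θ i ≤ θ₂ := by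
      intro i hi
      refine hmono ⟨1, hn1⟩ i ?_
      have : i.val ≠ 0 := fun h => hi (Fin.ext h)
      exact show (1:ℕ) ≤ i.val by omega
    have horth : ∀ i : Fin n, i ≠ 0 → u i ⬝ᵥ one = 0 := by
      intro i hi
      have h1 : u i ⬝ᵥ (N *ᵥ one) = (d:ℝ)^2 * (u i ⬝ᵥ one) := by
        rw [hN1, dotProduct_smul, smul_eq_mul]
      have h2 : u i ⬝ᵥ (N *ᵥ one) = θ i * (u i ⬝ᵥ one) := by
        rw [hsym, heig i, smul_dotProduct, smul_eq_mul]
      have h3 : ((d:ℝ)^2 - θ i) * (u i ⬝ᵥ one) = 0 := by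
        rw [sub_mul]; linarith
      have h4 : (d:ℝ)^2 - θ i ≠ 0 := by
        have := hle1 i hi; nlinarith
      exact (mul_eq_zero.mp h3).resolve_left h4
    set b : ℝ := u 0 ⬝ᵥ one with hbdef
    have hb : b ≠ 0 := by
      intro h0
      have h1 : (1:ℝ) = ∑ i, (one ⬝ᵥ u i) * u i 0 := by
        have := expand one 0
        simpa [hone] using this
      have h2 : ∑ i, (one ⬝ᵥ u i) * u i 0 = 0 := by
        refine Finset.sum_eq_zero fun i _ => ?_
        by_cases hi : i = 0
        · subst hi; rw [dotProduct_comm, ← hbdef, h0, zero_mul]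
        · rw [dotProduct_comm, horth i hi, zero_mul]
      rw [h2] at h1; norm_num at h1
    have hu0 : ∀ k, u 0 k = b⁻¹ := by
      intro k
      have h1 : (1:ℝ) = ∑ i, (one ⬝ᵥ u i) * u i k := by
        have := expand one k
        simpa [hone] using this
      have h2 : ∑ i, (one ⬝ᵥ u i) * u i k = b * u 0 k := by
        rw [Finset.sum_eq_single (0 : Fin n)]
        · rw [dotProduct_comm, ← hbdef]
        · intro i _ hi
          rw [dotProduct_comm, horth i hi, zero_mul]
        · intro h; exact absurd (Finset.mem_univ _) h
      rw [h2] at h1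
      exact eq_inv_of_mul_eq_one_right h1.symm
    set z : Fin n → ℝ := fun k => y k - (T.card : ℝ)/n with hz
    have hz_sum : ∑ k, z k = 0 := by
      rw [hz]
      rw [Finset.sum_sub_distrib, hysum]
      simp [Finset.card_univ]
      field_simp
      ring
    have hzu0 : z ⬝ᵥ u 0 = 0 := by
      have : z ⬝ᵥ u 0 = (∑ k, z k) * b⁻¹ := by
        rw [dotProduct, Finset.sum_mul]
        exact Finset.sum_congr rfl fun k _ => by rw [hu0 k]
      rw [this, hz_sum, zero_mul]
    have hzz : z ⬝ᵥ z ≤ T.card := by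
      have hcol : z ⬝ᵥ z = (T.card : ℝ) - (T.card:ℝ)^2 / n := by
        have h1 : z ⬝ᵥ z = ∑ k, (y k * y k - 2*((T.card:ℝ)/n)*y k + ((T.card:ℝ)/n)^2) := by
          refine Finset.sum_congr rfl fun k _ => ?_
          rw [hz]; ring
        rw [h1, Finset.sum_add_distrib, Finset.sum_sub_distrib, hyy2, ← Finset.mul_sum, hysum]
        simp only [Finset.sum_const, Finset.card_univ, Fintype.card_fin, nsmul_eq_mul]
        have hc : (T.card:ℝ)/n * n = T.card := div_mul_cancel₀ _ hnR.ne'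
        have hc2 : (T.card:ℝ)^2/n = T.card * ((T.card:ℝ)/n) := by rw [sq, mul_div_assoc]
        rw [hc2]
        linear_combination ((T.card:ℝ)/n) * hc
      rw [hcol]
      have : (0:ℝ) ≤ (T.card:ℝ)^2 / n := div_nonneg (sq_nonneg _) (Nat.cast_nonneg _)
      linarith
    have hAzN : (A *ᵥ z) ⬝ᵥ (A *ᵥ z) = z ⬝ᵥ (N *ᵥ z) := by
      rw [hNdef, ← Matrix.mulVec_mulVec]
      conv_rhs => rw [Matrix.dotProduct_mulVec, Matrix.vecMul_transpose]
    have ht20 : 0 ≤ θ₂ := hnonneg _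
    have hAzb : (A *ᵥ z) ⬝ᵥ (A *ᵥ z) ≤ θ₂ * (z ⬝ᵥ z) := by
      rw [hAzN, quad z]
      calc ∑ i, θ i * (z ⬝ᵥ u i)^2 ≤ ∑ i, θ₂ * (z ⬝ᵥ u i)^2 := by
            refine Finset.sum_le_sum fun i _ => ?_
            by_cases hi : i = 0
            · subst hi; rw [hzu0]; simp
            · exact mul_le_mul_of_nonneg_right (hle1 i hi) (sq_nonneg _)
        _ = θ₂ * (z ⬝ᵥ z) := by rw [← Finset.mul_sum, ← parseval z]
    have hkey : x ⬝ᵥ (A *ᵥ y) = ((T.card:ℝ)/n) * ((d:ℝ) * S.card) + x ⬝ᵥ (A *ᵥ z) := by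
      have hy' : y = ((T.card:ℝ)/n) • one + z := by
        funext k
        simp [hz, hone, smul_eq_mul]
      rw [hy', Matrix.mulVec_add, Matrix.mulVec_smul, hrowR, dotProduct_add,
        dotProduct_smul, dotProduct_smul, hx1, smul_eq_mul, smul_eq_mul]
    have hCS : (x ⬝ᵥ (A *ᵥ z))^2 ≤ (x ⬝ᵥ x) * ((A *ᵥ z) ⬝ᵥ (A *ᵥ z)) := by
      have := Finset.sum_mul_sq_le_sq_mul_sq Finset.univ x (A *ᵥ z)
      simpa [dotProduct, sq] using this
    have hfin2 : (x ⬝ᵥ (A *ᵥ z))^2 ≤ θ₂ * S.card * T.card := by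
      have h1 : (A *ᵥ z) ⬝ᵥ (A *ᵥ z) ≤ θ₂ * T.card :=
        le_trans hAzb (mul_le_mul_of_nonneg_left hzz ht20)
      have h2 : (0:ℝ) ≤ (A *ᵥ z) ⬝ᵥ (A *ᵥ z) := by
        rw [dotProduct]
        exact Finset.sum_nonneg fun k _ => mul_self_nonneg _
      calc (x ⬝ᵥ (A *ᵥ z))^2 ≤ (x ⬝ᵥ x) * ((A *ᵥ z) ⬝ᵥ (A *ᵥ z)) := hCS
        _ = (S.card : ℝ) * ((A *ᵥ z) ⬝ᵥ (A *ᵥ z)) := by rw [hxx]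
        _ ≤ (S.card : ℝ) * (θ₂ * T.card) := mul_le_mul_of_nonneg_left h1 (Nat.cast_nonneg _)
        _ = θ₂ * S.card * T.card := by ring
    have habs : |x ⬝ᵥ (A *ᵥ z)| ≤ Real.sqrt (θ₂ * S.card * T.card) :=
      Real.abs_le_sqrt hfin2
    rw [hE, hkey]
    have hrw : (((T.card:ℝ)/n) * ((d:ℝ) * S.card) + x ⬝ᵥ (A *ᵥ z)) * n
        - (S.card : ℝ) * T.card * d = n * (x ⬝ᵥ (A *ᵥ z)) := by
      field_simp
      ring
    rw [hrw, abs_mul, abs_of_nonneg (le_of_lt hnR)]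
    exact mul_le_mul_of_nonneg_left habs (le_of_lt hnR)
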